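/- arXiv:1502.03636 — 2 statements merged into one kernel-verified Lean document; each statement's English description precedes it below -/
import Mathlib

section
/- (1) For each ⊙ ∈ {□, ∥_A, ∧}: if p₁ ⊙ p₂ ⇒_F| p₃ then there exist p₁', p₂' with p₁ ⇒_F| p₁', p₂ ⇒_F| p₂' and p₃ ≡ p₁' ⊙ p₂'. (2) If p₁ ⇒_F| p₁' and p₂ ⇒_F| p₂', then p₁ ⊙ p₂ ⇒_F| p₁' ⊙ p₂' for ⊙ ∈ {□, ∥_A}, and p₁ ∧ p₂ ⇒_F| p₁' ∧ p₂' provided p₁' ∧ p₂' ∉ F. -/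
open Classical

/-- Visible actions plus the invisible action τ. -/
inductive ActT (Act : Type) : Type where
  | act : Act → ActT Act
  | tau : ActT Act

/-- Processes of the recursion-free calculus CLL. -/
inductive Proc (Act : Type) : Type where
  | nil  : Proc Act                                -- 0
  | bot  : Proc Act                                -- ⊥
  | pre  : ActT Act → Proc Act → Proc Act          -- α.t
  | ec   : Proc Act → Proc Act → Proc Act          -- t □ t
  | conj : Proc Act → Proc Act → Proc Act          -- t ∧ t
  | disj : Proc Act → Proc Act → Proc Act          -- t ∨ t
  | par  : Set Act → Proc Act → Proc Act → Proc Act -- t ∥_A t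

namespace Proc

variable {Act : Type}

/-- Whether a process has a τ-transition (structural stratification used for
the negative premises of the SOS rules). -/
def hasTau : Proc Act → Prop
  | nil => False
  | bot => False
  | pre a _ => a = ActT.tau
  | ec t₁ t₂ => hasTau t₁ ∨ hasTau t₂
  | conj t₁ t₂ => hasTau t₁ ∨ hasTau t₂
  | disj _ _ => True
  | par _ t₁ t₂ => hasTau t₁ ∨ hasTau t₂

/-- The transition relation, given by the SOS rules of CLL_R. -/
inductive Trans : Proc Act → ActT Act → Proc Act → Prop where
  | pre : Trans (pre α t) α t
  | ecL : Trans t₁ (ActT.act a) t₁' → ¬ hasTau t₂ →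
      Trans (ec t₁ t₂) (ActT.act a) t₁'
  | ecR : ¬ hasTau t₁ → Trans t₂ (ActT.act a) t₂' →
      Trans (ec t₁ t₂) (ActT.act a) t₂'
  | ecTauL : Trans t₁ ActT.tau t₁' → Trans (ec t₁ t₂) ActT.tau (ec t₁' t₂)
  | ecTauR : Trans t₂ ActT.tau t₂' → Trans (ec t₁ t₂) ActT.tau (ec t₁ t₂')
  | conjAct : Trans t₁ (ActT.act a) t₁' → Trans t₂ (ActT.act a) t₂' →
      Trans (conj t₁ t₂) (ActT.act a) (conj t₁' t₂')
  | conjTauL : Trans t₁ ActT.tau t₁' → Trans (conj t₁ t₂) ActT.tau (conj t₁' t₂)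
  | conjTauR : Trans t₂ ActT.tau t₂' → Trans (conj t₁ t₂) ActT.tau (conj t₁ t₂')
  | disjL : Trans (disj t₁ t₂) ActT.tau t₁
  | disjR : Trans (disj t₁ t₂) ActT.tau t₂
  | parTauL : Trans t₁ ActT.tau t₁' → Trans (par A t₁ t₂) ActT.tau (par A t₁' t₂)
  | parTauR : Trans t₂ ActT.tau t₂' → Trans (par A t₁ t₂) ActT.tau (par A t₁ t₂')
  | parL : a ∉ A → Trans t₁ (ActT.act a) t₁' → ¬ hasTau t₂ →
      Trans (par A t₁ t₂) (ActT.act a) (par A t₁' t₂)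
  | parR : a ∉ A → ¬ hasTau t₁ → Trans t₂ (ActT.act a) t₂' →
      Trans (par A t₁ t₂) (ActT.act a) (par A t₁ t₂')
  | parSync : a ∈ A → Trans t₁ (ActT.act a) t₁' → Trans t₂ (ActT.act a) t₂' →
      Trans (par A t₁ t₂) (ActT.act a) (par A t₁' t₂')

/-- The ready set I(p). -/
def ready (p : Proc Act) : Set (ActT Act) := {α | ∃ q, Trans p α q}

/-- p is stable if it has no τ-transition. -/
def Stable (p : Proc Act) : Prop := ∀ q, ¬ Trans p ActT.tau q

/-- The inconsistency predicate F, as the least predicate closed under the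
predicative rules of CLL_R. -/
inductive Fp : Proc Act → Prop where
  | bot : Fp bot
  | pre : Fp t → Fp (pre α t)
  | disj : Fp t₁ → Fp t₂ → Fp (disj t₁ t₂)
  | ecL : Fp t₁ → Fp (ec t₁ t₂)
  | ecR : Fp t₂ → Fp (ec t₁ t₂)
  | parL : Fp t₁ → Fp (par A t₁ t₂)
  | parR : Fp t₂ → Fp (par A t₁ t₂)
  | conjL : Fp t₁ → Fp (conj t₁ t₂)
  | conjR : Fp t₂ → Fp (conj t₁ t₂)
  | conjReady : Stable (conj t₁ t₂) → ready t₁ ≠ ready t₂ → Fp (conj t₁ t₂)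
  | conjSucc : Trans (conj t₁ t₂) α s → (∀ y, Trans (conj t₁ t₂) α y → Fp y) →
      Fp (conj t₁ t₂)
  | conjStable :
      (∀ y, Relation.ReflTransGen (fun x z => Trans x ActT.tau z) (conj t₁ t₂) y →
        Stable y → Fp y) →
      Fp (conj t₁ t₂)

/-- One τ-step with both endpoints consistent. -/
def tauStepF (p q : Proc Act) : Prop := Trans p ActT.tau q ∧ ¬ Fp p ∧ ¬ Fp q

/-- p ⇒_F| q : a sequence of τ-transitions from p to q, all states outside F,
with q stable. -/
def epsF (p q : Proc Act) : Prop :=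
  Relation.ReflTransGen tauStepF p q ∧ ¬ Fp p ∧ ¬ Fp q ∧ Stable q

/-- p =a⇒_F| q. -/
def wkF (a : Act) (p q : Proc Act) : Prop :=
  ∃ r s, Relation.ReflTransGen tauStepF p r ∧ ¬ Fp p ∧ ¬ Fp r ∧
    Trans r (ActT.act a) s ∧ ¬ Fp s ∧
    Relation.ReflTransGen tauStepF s q ∧ ¬ Fp q ∧ Stable q

/-- R is a stable ready simulation. -/
def StableRS (R : Proc Act → Proc Act → Prop) : Prop :=
  ∀ p q, R p q →
    Stable p ∧ Stable q ∧
    (¬ Fp p → ¬ Fp q) ∧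
    (∀ a p', wkF a p p' → ∃ q', wkF a q q' ∧ R p' q') ∧
    (¬ Fp p → ready p = ready q)

/-- p ⊏̃_RS q. -/
def rsLT (p q : Proc Act) : Prop := ∃ R, StableRS R ∧ R p q

/-- p ⊑_RS q. -/
def rsLE (p q : Proc Act) : Prop :=
  ∀ p', epsF p p' → ∃ q', epsF q q' ∧ rsLT p' q'

/-- p =_RS q. -/
def rsEq (p q : Proc Act) : Prop := rsLE p q ∧ rsLE q p

/-- Basic process terms T(Σ_B): no ⊥ and no ∧. -/
inductive Basic : Proc Act → Prop where
  | nil : Basic nil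
  | pre : Basic t → Basic (pre α t)
  | disj : Basic t₁ → Basic t₂ → Basic (disj t₁ t₂)
  | ec : Basic t₁ → Basic t₂ → Basic (ec t₁ t₂)
  | par : Basic t₁ → Basic t₂ → Basic (par A t₁ t₂)

/-- General external choice □ over a finite sequence (left-nested). -/
def ecList : List (Proc Act) → Proc Act
  | [] => nil
  | t :: ts => ts.foldl ec t

/-- General disjunction ⋁ over a nonempty finite sequence (left-nested). -/
def djList : List (Proc Act) → Proc Act
  | [] => bot
  | t :: ts => ts.foldl disj t

/-- □_{i<n} a_i.t_i for a sequence of prefixed terms. -/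
def ecPre (l : List (Act × Proc Act)) : Proc Act :=
  ecList (l.map fun x => pre (ActT.act x.1) x.2)

/-- The expansion term E = ((□Ω₁) □ (□Ω₂)) □ (□Ω₃). -/
noncomputable def expTerm (A : Set Act) (l₁ l₂ : List (Act × Proc Act)) : Proc Act :=
  ec (ec
      (ecList ((l₁.filter fun x => decide (x.1 ∉ A)).map
        fun x => pre (ActT.act x.1) (par A x.2 (ecPre l₂))))
      (ecList ((l₂.filter fun x => decide (x.1 ∉ A)).map
        fun x => pre (ActT.act x.1) (par A (ecPre l₁) x.2))))
    (ecList (l₁.flatMap fun x =>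
      (l₂.filter fun y => decide (y.1 = x.1 ∧ x.1 ∈ A)).map
        fun y => pre (ActT.act x.1) (par A x.2 y.2)))

/-- Normal forms NF_B. -/
inductive NFB : Proc Act → Prop where
  | mk (ls : List (List (Act × Proc Act))) (hne : ls ≠ [])
      (hnodup : ∀ l ∈ ls, (l.map Prod.fst).Nodup)
      (hsub : ∀ l ∈ ls, ∀ x ∈ l, NFB x.2) :
      NFB (djList (ls.map ecPre))

/-- NF = NF_B ∪ {⊥}. -/
def NF (p : Proc Act) : Prop := NFB p ∨ p = bot

/-- Derivability ⊢ t ≤ t' in the proof system AX_CLL. -/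
inductive Deriv : Proc Act → Proc Act → Prop where
  | refl (t) : Deriv t t
  | trans : Deriv t t' → Deriv t' t'' → Deriv t t''
  | mono_pre : Deriv t t' → Deriv (pre α t) (pre α t')
  | mono_ec : Deriv s s' → Deriv t t' → Deriv (ec s t) (ec s' t')
  | mono_conj : Deriv s s' → Deriv t t' → Deriv (conj s t) (conj s' t')
  | mono_disj : Deriv s s' → Deriv t t' → Deriv (disj s t) (disj s' t')
  | mono_par : Deriv s s' → Deriv t t' → Deriv (par A s t) (par A s' t')
  -- external choice
  | ec_comm : Deriv (ec x y) (ec y x)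
  | ec_assoc₁ : Deriv (ec (ec x y) z) (ec x (ec y z))
  | ec_assoc₂ : Deriv (ec x (ec y z)) (ec (ec x y) z)
  | ec_idem₁ : Deriv (ec x x) x
  | ec_idem₂ : Deriv x (ec x x)
  | ec_nil₁ : Deriv (ec x nil) x
  | ec_nil₂ : Deriv x (ec x nil)
  | ec_bot₁ : Deriv (ec x bot) bot
  | ec_bot₂ : Deriv bot (ec x bot)
  -- disjunction
  | disj_comm : Deriv (disj x y) (disj y x)
  | disj_assoc₁ : Deriv (disj x (disj y z)) (disj (disj x y) z)
  | disj_assoc₂ : Deriv (disj (disj x y) z) (disj x (disj y z))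
  | disj_idem₁ : Deriv (disj x x) x
  | disj_idem₂ : Deriv x (disj x x)
  | disj_bot₁ : Deriv (disj x bot) x
  | disj_bot₂ : Deriv x (disj x bot)
  | disj_le : Deriv x (disj x y)
  -- conjunction
  | conj_comm : Deriv (conj x y) (conj y x)
  | conj_idem₁ : Deriv (conj x x) x
  | conj_idem₂ : Deriv x (conj x x)
  | conj_bot₁ : Deriv (conj x bot) bot
  | conj_bot₂ : Deriv bot (conj x bot)
  -- prefixing
  | pre_bot₁ : Deriv (pre (ActT.act a) bot) bot
  | pre_bot₂ : Deriv bot (pre (ActT.act a) bot)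
  | tau_pre₁ : Deriv (pre ActT.tau x) x
  | tau_pre₂ : Deriv x (pre ActT.tau x)
  -- parallel
  | par_comm : Deriv (par A x y) (par A y x)
  | par_bot₁ : Deriv (par A x bot) bot
  | par_bot₂ : Deriv bot (par A x bot)
  -- distribution over disjunction
  | ds_ec : Deriv (ec x (disj y z)) (disj (ec x y) (ec x z))
  | ds_conj : Deriv (conj x (disj y z)) (disj (conj x y) (conj x z))
  | ds_par : Deriv (par A x (disj y z)) (disj (par A x y) (par A x z))
  | ds_pre : Basic x → Basic y →
      Deriv (pre (ActT.act a) (disj x y)) (ec (pre (ActT.act a) x) (pre (ActT.act a) y))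
  -- external choice and conjunction
  | ecc1₁ (l₁ l₂ : List (Act × Proc Act)) :
      {a | a ∈ l₁.map Prod.fst} ≠ {a | a ∈ l₂.map Prod.fst} →
      Deriv (conj (ecPre l₁) (ecPre l₂)) bot
  | ecc1₂ (l₁ l₂ : List (Act × Proc Act)) :
      {a | a ∈ l₁.map Prod.fst} ≠ {a | a ∈ l₂.map Prod.fst} →
      Deriv bot (conj (ecPre l₁) (ecPre l₂))
  | ecc2 (l : List (Act × Proc Act × Proc Act)) :
      Deriv (ecPre (l.map fun x => (x.1, conj x.2.1 x.2.2)))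
            (conj (ecPre (l.map fun x => (x.1, x.2.1)))
                  (ecPre (l.map fun x => (x.1, x.2.2))))
  | ecc3 (l : List (Act × Proc Act × Proc Act)) :
      (l.map Prod.fst).Nodup →
      Deriv (conj (ecPre (l.map fun x => (x.1, x.2.1)))
                  (ecPre (l.map fun x => (x.1, x.2.2))))
            (ecPre (l.map fun x => (x.1, conj x.2.1 x.2.2)))
  -- expansion
  | exp1 (A : Set Act) (l₁ l₂ : List (Act × Proc Act)) :
      Deriv (par A (ecPre l₁) (ecPre l₂)) (expTerm A l₁ l₂)
  | exp2 (A : Set Act) (l₁ l₂ : List (Act × Proc Act)) :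
      (∀ x ∈ l₁, Basic x.2) → (∀ x ∈ l₂, Basic x.2) →
      Deriv (expTerm A l₁ l₂) (par A (ecPre l₁) (ecPre l₂))


section AuxLemmas

open Relation

private lemma hasTau_of_tau {t t' : Proc Act} {α} (h : Trans t α t') :
    α = ActT.tau → hasTau t := by
  induction h <;> intro hα <;> simp_all [hasTau]

private lemma not_hasTau_of_act {t t' : Proc Act} {α} (h : Trans t α t') :
    (∃ a, α = ActT.act a) → ¬ hasTau t := by
  induction h <;> rintro ⟨a, ha⟩ <;> simp_all [hasTau]

private lemma ec_tau_inv {t₁ t₂ q : Proc Act} (h : Trans (ec t₁ t₂) ActT.tau q) :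
    (∃ t₁', Trans t₁ ActT.tau t₁' ∧ q = ec t₁' t₂) ∨
    (∃ t₂', Trans t₂ ActT.tau t₂' ∧ q = ec t₁ t₂') := by
  cases h with
  | ecTauL h => exact Or.inl ⟨_, h, rfl⟩
  | ecTauR h => exact Or.inr ⟨_, h, rfl⟩

private lemma par_tau_inv {A : Set Act} {t₁ t₂ q : Proc Act}
    (h : Trans (par A t₁ t₂) ActT.tau q) :
    (∃ t₁', Trans t₁ ActT.tau t₁' ∧ q = par A t₁' t₂) ∨
    (∃ t₂', Trans t₂ ActT.tau t₂' ∧ q = par A t₁ t₂') := by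
  cases h with
  | parTauL h => exact Or.inl ⟨_, h, rfl⟩
  | parTauR h => exact Or.inr ⟨_, h, rfl⟩

private lemma conj_tau_inv {t₁ t₂ q : Proc Act} (h : Trans (conj t₁ t₂) ActT.tau q) :
    (∃ t₁', Trans t₁ ActT.tau t₁' ∧ q = conj t₁' t₂) ∨
    (∃ t₂', Trans t₂ ActT.tau t₂' ∧ q = conj t₁ t₂') := by
  cases h with
  | conjTauL h => exact Or.inl ⟨_, h, rfl⟩
  | conjTauR h => exact Or.inr ⟨_, h, rfl⟩

private lemma ec_F_inv {t₁ t₂ : Proc Act} (h : Fp (ec t₁ t₂)) : Fp t₁ ∨ Fp t₂ := by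
  cases h with
  | ecL h => exact Or.inl h
  | ecR h => exact Or.inr h

private lemma par_F_inv {A : Set Act} {t₁ t₂ : Proc Act} (h : Fp (par A t₁ t₂)) :
    Fp t₁ ∨ Fp t₂ := by
  cases h with
  | parL h => exact Or.inl h
  | parR h => exact Or.inr h

private lemma chain_decomp {op : Proc Act → Proc Act → Proc Act}
    (hinv : ∀ t₁ t₂ q, Trans (op t₁ t₂) ActT.tau q →
      (∃ t₁', Trans t₁ ActT.tau t₁' ∧ q = op t₁' t₂) ∨
      (∃ t₂', Trans t₂ ActT.tau t₂' ∧ q = op t₁ t₂'))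
    (hFL : ∀ t₁ t₂ : Proc Act, Fp t₁ → Fp (op t₁ t₂))
    (hFR : ∀ t₁ t₂ : Proc Act, Fp t₂ → Fp (op t₁ t₂))
    {p₁ p₂ p₃ : Proc Act} (h : ReflTransGen tauStepF (op p₁ p₂) p₃) :
    ∃ q₁ q₂, p₃ = op q₁ q₂ ∧ ReflTransGen tauStepF p₁ q₁ ∧ ReflTransGen tauStepF p₂ q₂ := by
  induction h with
  | refl => exact ⟨p₁, p₂, rfl, .refl, .refl⟩
  | tail hs hstep ih =>
    obtain ⟨q₁, q₂, rfl, h1, h2⟩ := ih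
    obtain ⟨ht, hF1, hF2⟩ := hstep
    rcases hinv _ _ _ ht with ⟨r, hr, rfl⟩ | ⟨r, hr, rfl⟩
    · exact ⟨r, q₂, rfl, h1.tail ⟨hr, fun h => hF1 (hFL _ _ h), fun h => hF2 (hFL _ _ h)⟩, h2⟩
    · exact ⟨q₁, r, rfl, h1, h2.tail ⟨hr, fun h => hF1 (hFR _ _ h), fun h => hF2 (hFR _ _ h)⟩⟩

private lemma eps_decomp {op : Proc Act → Proc Act → Proc Act}
    (hinv : ∀ t₁ t₂ q, Trans (op t₁ t₂) ActT.tau q →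
      (∃ t₁', Trans t₁ ActT.tau t₁' ∧ q = op t₁' t₂) ∨
      (∃ t₂', Trans t₂ ActT.tau t₂' ∧ q = op t₁ t₂'))
    (hFL : ∀ t₁ t₂ : Proc Act, Fp t₁ → Fp (op t₁ t₂))
    (hFR : ∀ t₁ t₂ : Proc Act, Fp t₂ → Fp (op t₁ t₂))
    (hup1 : ∀ t₁ t₂ t₁' : Proc Act, Trans t₁ ActT.tau t₁' →
      Trans (op t₁ t₂) ActT.tau (op t₁' t₂))
    (hup2 : ∀ t₁ t₂ t₂' : Proc Act, Trans t₂ ActT.tau t₂' →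
      Trans (op t₁ t₂) ActT.tau (op t₁ t₂'))
    {p₁ p₂ p₃ : Proc Act} (h : epsF (op p₁ p₂) p₃) :
    ∃ q₁ q₂, epsF p₁ q₁ ∧ epsF p₂ q₂ ∧ p₃ = op q₁ q₂ := by
  obtain ⟨hc, hs, he, hst⟩ := h
  obtain ⟨q₁, q₂, rfl, h1, h2⟩ := chain_decomp hinv hFL hFR hc
  exact ⟨q₁, q₂,
    ⟨h1, fun h => hs (hFL _ _ h), fun h => he (hFL _ _ h),
      fun q ht => hst _ (hup1 _ _ _ ht)⟩,
    ⟨h2, fun h => hs (hFR _ _ h), fun h => he (hFR _ _ h),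
      fun q ht => hst _ (hup2 _ _ _ ht)⟩, rfl⟩

private lemma chain_liftL {op : Proc Act → Proc Act → Proc Act}
    (hFinv : ∀ t₁ t₂ : Proc Act, Fp (op t₁ t₂) → Fp t₁ ∨ Fp t₂)
    (hup1 : ∀ t₁ t₂ t₁' : Proc Act, Trans t₁ ActT.tau t₁' →
      Trans (op t₁ t₂) ActT.tau (op t₁' t₂))
    {p₁ p₁' : Proc Act} (h : ReflTransGen tauStepF p₁ p₁') (p₂ : Proc Act) (h2 : ¬ Fp p₂) :
    ReflTransGen tauStepF (op p₁ p₂) (op p₁' p₂) := by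
  induction h with
  | refl => exact .refl
  | tail hs hstep ih =>
    refine ih.tail ⟨hup1 _ _ _ hstep.1, ?_, ?_⟩
    · intro h; rcases hFinv _ _ h with h | h
      · exact hstep.2.1 h
      · exact h2 h
    · intro h; rcases hFinv _ _ h with h | h
      · exact hstep.2.2 h
      · exact h2 h

private lemma chain_liftR {op : Proc Act → Proc Act → Proc Act}
    (hFinv : ∀ t₁ t₂ : Proc Act, Fp (op t₁ t₂) → Fp t₁ ∨ Fp t₂)
    (hup2 : ∀ t₁ t₂ t₂' : Proc Act, Trans t₂ ActT.tau t₂' →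
      Trans (op t₁ t₂) ActT.tau (op t₁ t₂'))
    {p₂ p₂' : Proc Act} (h : ReflTransGen tauStepF p₂ p₂') (p₁ : Proc Act) (h1 : ¬ Fp p₁) :
    ReflTransGen tauStepF (op p₁ p₂) (op p₁ p₂') := by
  induction h with
  | refl => exact .refl
  | tail hs hstep ih =>
    refine ih.tail ⟨hup2 _ _ _ hstep.1, ?_, ?_⟩
    · intro h; rcases hFinv _ _ h with h | h
      · exact h1 h
      · exact hstep.2.1 h
    · intro h; rcases hFinv _ _ h with h | h
      · exact h1 h
      · exact hstep.2.2 h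

private lemma eps_lift {op : Proc Act → Proc Act → Proc Act}
    (hFinv : ∀ t₁ t₂ : Proc Act, Fp (op t₁ t₂) → Fp t₁ ∨ Fp t₂)
    (hinv : ∀ t₁ t₂ q, Trans (op t₁ t₂) ActT.tau q →
      (∃ t₁', Trans t₁ ActT.tau t₁' ∧ q = op t₁' t₂) ∨
      (∃ t₂', Trans t₂ ActT.tau t₂' ∧ q = op t₁ t₂'))
    (hup1 : ∀ t₁ t₂ t₁' : Proc Act, Trans t₁ ActT.tau t₁' →
      Trans (op t₁ t₂) ActT.tau (op t₁' t₂))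
    (hup2 : ∀ t₁ t₂ t₂' : Proc Act, Trans t₂ ActT.tau t₂' →
      Trans (op t₁ t₂) ActT.tau (op t₁ t₂'))
    {p₁ p₂ p₁' p₂' : Proc Act} (h1 : epsF p₁ p₁') (h2 : epsF p₂ p₂') :
    epsF (op p₁ p₂) (op p₁' p₂') := by
  obtain ⟨c1, s1, e1, st1⟩ := h1
  obtain ⟨c2, s2, e2, st2⟩ := h2
  have notF : ∀ {t₁ t₂ : Proc Act}, ¬ Fp t₁ → ¬ Fp t₂ → ¬ Fp (op t₁ t₂) :=
    fun a b h => (hFinv _ _ h).elim a b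
  refine ⟨(chain_liftL hFinv hup1 c1 _ s2).trans (chain_liftR hFinv hup2 c2 _ e1),
    notF s1 s2, notF e1 e2, ?_⟩
  intro q ht
  rcases hinv _ _ _ ht with ⟨r, hr, _⟩ | ⟨r, hr, _⟩
  · exact st1 _ hr
  · exact st2 _ hr

private lemma plain {p q : Proc Act} (h : ReflTransGen tauStepF p q) :
    ReflTransGen (fun x z : Proc Act => Trans x ActT.tau z) p q :=
  ReflTransGen.mono (r := tauStepF) (fun _ _ hs => hs.1) _ _ h

private lemma plain_liftL {p p' r : Proc Act}
    (h : ReflTransGen (fun x z : Proc Act => Trans x ActT.tau z) p p') :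
    ReflTransGen (fun x z : Proc Act => Trans x ActT.tau z) (conj p r) (conj p' r) := by
  induction h with
  | refl => exact .refl
  | tail _ hstep ih => exact ih.tail (Trans.conjTauL hstep)

private lemma plain_liftR {p p' r : Proc Act}
    (h : ReflTransGen (fun x z : Proc Act => Trans x ActT.tau z) p p') :
    ReflTransGen (fun x z : Proc Act => Trans x ActT.tau z) (conj r p) (conj r p') := by
  induction h with
  | refl => exact .refl
  | tail _ hstep ih => exact ih.tail (Trans.conjTauR hstep)

private lemma conj_notF {q₁ q₂ r z : Proc Act}
    (h1 : ¬ Fp q₁) (h2 : ¬ Fp q₂)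
    (hstep : Trans (conj q₁ q₂) ActT.tau r) (hrF : ¬ Fp r)
    (hreach : ReflTransGen (fun x z : Proc Act => Trans x ActT.tau z) (conj q₁ q₂) z)
    (hzS : Stable z) (hzF : ¬ Fp z) :
    ¬ Fp (conj q₁ q₂) := by
  intro hF
  cases hF with
  | conjL h => exact h1 h
  | conjR h => exact h2 h
  | conjReady hs _ => exact hs _ hstep
  | conjSucc htr hall =>
    cases htr with
    | conjAct ha1 ha2 =>
      cases hstep with
      | conjTauL ht => exact not_hasTau_of_act ha1 ⟨_, rfl⟩ (hasTau_of_tau ht rfl)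
      | conjTauR ht => exact not_hasTau_of_act ha2 ⟨_, rfl⟩ (hasTau_of_tau ht rfl)
    | conjTauL ht => exact hrF (hall _ hstep)
    | conjTauR ht => exact hrF (hall _ hstep)
  | conjStable hall => exact hzF (hall _ hreach hzS)

private lemma conj_liftR {p₁' p₂' : Proc Act}
    (hS : Stable (conj p₁' p₂')) (hF : ¬ Fp (conj p₁' p₂'))
    {p₂ : Proc Act} (h2 : ReflTransGen tauStepF p₂ p₂') (hp₂ : ¬ Fp p₂) :
    ReflTransGen tauStepF (conj p₁' p₂) (conj p₁' p₂') ∧ ¬ Fp (conj p₁' p₂) := by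
  revert hp₂
  induction h2 using ReflTransGen.head_induction_on with
  | refl => intro _; exact ⟨.refl, hF⟩
  | head hstep hrest ih =>
    intro hp₂
    obtain ⟨hchain, hFc⟩ := ih hstep.2.2
    have hF1' : ¬ Fp p₁' := fun h => hF (Fp.conjL h)
    have hnF := conj_notF hF1' hp₂ (Trans.conjTauR hstep.1) hFc
      (ReflTransGen.head (Trans.conjTauR hstep.1) (plain_liftR (plain hrest))) hS hF
    exact ⟨.head ⟨Trans.conjTauR hstep.1, hnF, hFc⟩ hchain, hnF⟩

private lemma conj_liftFull {p₁' p₂' : Proc Act}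
    (hS : Stable (conj p₁' p₂')) (hF : ¬ Fp (conj p₁' p₂'))
    {p₁ p₂ : Proc Act} (h1 : ReflTransGen tauStepF p₁ p₁')
    (h2 : ReflTransGen tauStepF p₂ p₂') (hp₁ : ¬ Fp p₁) (hp₂ : ¬ Fp p₂) :
    ReflTransGen tauStepF (conj p₁ p₂) (conj p₁' p₂') ∧ ¬ Fp (conj p₁ p₂) := by
  revert hp₁
  induction h1 using ReflTransGen.head_induction_on with
  | refl => intro _; exact conj_liftR hS hF h2 hp₂
  | head hstep hrest ih =>
    intro hp₁
    obtain ⟨hchain, hFc⟩ := ih hstep.2.2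
    have reach := ReflTransGen.head (Trans.conjTauL hstep.1)
      ((plain_liftL (plain hrest)).trans (plain_liftR (plain h2)))
    have hnF := conj_notF hp₁ hp₂ (Trans.conjTauL hstep.1) hFc reach hS hF
    exact ⟨.head ⟨Trans.conjTauL hstep.1, hnF, hFc⟩ hchain, hnF⟩

end AuxLemmas

end Proc

namespace Proc

/-- Consistent stable ε-derivatives of compositions decompose, and conversely. -/
theorem stmt4 {Act : Type} :
    (∀ p₁ p₂ p₃ : Proc Act, epsF (ec p₁ p₂) p₃ →
      ∃ p₁' p₂', epsF p₁ p₁' ∧ epsF p₂ p₂' ∧ p₃ = ec p₁' p₂') ∧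
    (∀ (A : Set Act) (p₁ p₂ p₃ : Proc Act), epsF (par A p₁ p₂) p₃ →
      ∃ p₁' p₂', epsF p₁ p₁' ∧ epsF p₂ p₂' ∧ p₃ = par A p₁' p₂') ∧
    (∀ p₁ p₂ p₃ : Proc Act, epsF (conj p₁ p₂) p₃ →
      ∃ p₁' p₂', epsF p₁ p₁' ∧ epsF p₂ p₂' ∧ p₃ = conj p₁' p₂') ∧
    (∀ p₁ p₂ p₁' p₂' : Proc Act, epsF p₁ p₁' → epsF p₂ p₂' →
      epsF (ec p₁ p₂) (ec p₁' p₂')) ∧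
    (∀ (A : Set Act) (p₁ p₂ p₁' p₂' : Proc Act), epsF p₁ p₁' → epsF p₂ p₂' →
      epsF (par A p₁ p₂) (par A p₁' p₂')) ∧
    (∀ p₁ p₂ p₁' p₂' : Proc Act, epsF p₁ p₁' → epsF p₂ p₂' →
      ¬ Fp (conj p₁' p₂') → epsF (conj p₁ p₂) (conj p₁' p₂')) := by
  refine ⟨?_, ?_, ?_, ?_, ?_, ?_⟩
  · intro p₁ p₂ p₃ h
    exact eps_decomp (fun _ _ _ => ec_tau_inv) (fun _ _ => Fp.ecL) (fun _ _ => Fp.ecR)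
      (fun _ _ _ => Trans.ecTauL) (fun _ _ _ => Trans.ecTauR) h
  · intro A p₁ p₂ p₃ h
    exact eps_decomp (fun _ _ _ => par_tau_inv) (fun _ _ => Fp.parL) (fun _ _ => Fp.parR)
      (fun _ _ _ => Trans.parTauL) (fun _ _ _ => Trans.parTauR) h
  · intro p₁ p₂ p₃ h
    exact eps_decomp (fun _ _ _ => conj_tau_inv) (fun _ _ => Fp.conjL) (fun _ _ => Fp.conjR)
      (fun _ _ _ => Trans.conjTauL) (fun _ _ _ => Trans.conjTauR) h
  · intro p₁ p₂ p₁' p₂' h1 h2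
    exact eps_lift (fun _ _ => ec_F_inv) (fun _ _ _ => ec_tau_inv)
      (fun _ _ _ => Trans.ecTauL) (fun _ _ _ => Trans.ecTauR) h1 h2
  · intro A p₁ p₂ p₁' p₂' h1 h2
    exact eps_lift (fun _ _ => par_F_inv) (fun _ _ _ => par_tau_inv)
      (fun _ _ _ => Trans.parTauL) (fun _ _ _ => Trans.parTauR) h1 h2
  · intro p₁ p₂ p₁' p₂' h1 h2 hF
    obtain ⟨c1, s1, e1, st1⟩ := h1
    obtain ⟨c2, s2, e2, st2⟩ := h2
    have hS : Stable (conj p₁' p₂') := by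
      intro q ht
      cases ht with
      | conjTauL h => exact st1 _ h
      | conjTauR h => exact st2 _ h
    obtain ⟨hchain, hstart⟩ := conj_liftFull hS hF c1 c2 s1 s2
    exact ⟨hchain, hstart, hF, hS⟩

end Proc
end

section
/- For all processes p₁, p₂, p₃ of the recursion-free calculus CLL: (1) p_i ⊑_RS p₁ ∨ p₂ for i = 1, 2; (2) if p₁ ⊑_RS p₃ and p₂ ⊑_RS p₃ then p₁ ∨ p₂ ⊑_RS p₃; (3) p₁ ∧ p₂ ⊑_RS p_i for i = 1, 2; (4) if p₁ ⊑_RS p₂ and p₁ ⊑_RS p₃ then p₁ ⊑_RS p₂ ∧ p₃. -/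
open Classical

namespace Proc

variable {Act : Type}

abbrev tauT (p q : Proc Act) : Prop := Trans p ActT.tau q

lemma trans_tau_hasTau {p q : Proc Act} (h : Trans p ActT.tau q) : hasTau p := by
  generalize hα : ActT.tau = α at h
  induction h <;> simp_all [hasTau]

lemma hasTau_trans {p : Proc Act} (h : hasTau p) : ∃ q, Trans p ActT.tau q := by
  induction p with
  | nil => simp [hasTau] at h
  | bot => simp [hasTau] at h
  | pre a t => simp [hasTau] at h; subst h; exact ⟨t, Trans.pre⟩
  | ec t₁ t₂ ih₁ ih₂ =>
    rcases h with h | h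
    · obtain ⟨q, hq⟩ := ih₁ h; exact ⟨_, Trans.ecTauL hq⟩
    · obtain ⟨q, hq⟩ := ih₂ h; exact ⟨_, Trans.ecTauR hq⟩
  | conj t₁ t₂ ih₁ ih₂ =>
    rcases h with h | h
    · obtain ⟨q, hq⟩ := ih₁ h; exact ⟨_, Trans.conjTauL hq⟩
    · obtain ⟨q, hq⟩ := ih₂ h; exact ⟨_, Trans.conjTauR hq⟩
  | disj t₁ t₂ _ _ => exact ⟨t₁, Trans.disjL⟩
  | par A t₁ t₂ ih₁ ih₂ =>
    rcases h with h | h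
    · obtain ⟨q, hq⟩ := ih₁ h; exact ⟨_, Trans.parTauL hq⟩
    · obtain ⟨q, hq⟩ := ih₂ h; exact ⟨_, Trans.parTauR hq⟩

lemma stable_iff {p : Proc Act} : Stable p ↔ ¬ hasTau p := by
  constructor
  · intro hs h; obtain ⟨q, hq⟩ := hasTau_trans h; exact hs q hq
  · intro h q hq; exact h (trans_tau_hasTau hq)

lemma act_not_hasTau {p q : Proc Act} {a : Act} (h : Trans p (ActT.act a) q) :
    ¬ hasTau p := by
  generalize hα : ActT.act a = α at h
  induction h with
  | pre => simp [hasTau, ← hα]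
  | ecL h₁ h₂ ih => simp [hasTau]; exact ⟨ih hα, h₂⟩
  | ecR h₁ h₂ ih => simp [hasTau]; exact ⟨h₁, ih hα⟩
  | conjAct h₁ h₂ ih₁ ih₂ => simp [hasTau]; exact ⟨ih₁ hα, ih₂ hα⟩
  | parL hm h₁ h₂ ih => simp [hasTau]; exact ⟨ih hα, h₂⟩
  | parR hm h₁ h₂ ih => simp [hasTau]; exact ⟨h₁, ih hα⟩
  | parSync hm h₁ h₂ ih₁ ih₂ => simp [hasTau]; exact ⟨ih₁ hα, ih₂ hα⟩
  | _ => simp_all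

lemma act_stable {p q : Proc Act} {a : Act} (h : Trans p (ActT.act a) q) : Stable p :=
  stable_iff.2 (act_not_hasTau h)

lemma stable_conj {x y : Proc Act} (hx : Stable x) (hy : Stable y) :
    Stable (conj x y) := by
  intro q hq; cases hq with
  | conjTauL h => exact hx _ h
  | conjTauR h => exact hy _ h

lemma stable_conj_left {x y : Proc Act} (h : Stable (conj x y)) : Stable x := by
  intro q hq; exact h _ (Trans.conjTauL hq)

lemma stable_conj_right {x y : Proc Act} (h : Stable (conj x y)) : Stable y := by
  intro q hq; exact h _ (Trans.conjTauR hq)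

lemma Fp_pre_inv {α : ActT Act} {t : Proc Act} (h : Fp (pre α t)) : Fp t := by
  cases h; assumption

lemma Fp_disj_inv {x y : Proc Act} (h : Fp (disj x y)) : Fp x ∧ Fp y := by
  cases h; exact ⟨‹_›, ‹_›⟩

lemma Fp_ec_inv {x y : Proc Act} (h : Fp (ec x y)) : Fp x ∨ Fp y := by
  cases h
  · exact Or.inl ‹_›
  · exact Or.inr ‹_›

lemma Fp_par_inv {A : Set Act} {x y : Proc Act} (h : Fp (par A x y)) : Fp x ∨ Fp y := by
  cases h
  · exact Or.inl ‹_›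
  · exact Or.inr ‹_›

lemma notFp_conj_left {x y : Proc Act} (h : ¬ Fp (conj x y)) : ¬ Fp x :=
  fun hx => h (Fp.conjL hx)

lemma notFp_conj_right {x y : Proc Act} (h : ¬ Fp (conj x y)) : ¬ Fp y :=
  fun hy => h (Fp.conjR hy)

lemma bot_no_trans {α : ActT Act} {q : Proc Act} (h : Trans (bot : Proc Act) α q) : False := by
  cases h

lemma nil_no_trans {α : ActT Act} {q : Proc Act} (h : Trans (nil : Proc Act) α q) : False := by
  cases h


/-- Size measure. -/
def size : Proc Act → Nat
  | nil => 1
  | bot => 1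
  | pre _ t => size t + 1
  | ec t₁ t₂ => size t₁ + size t₂ + 1
  | conj t₁ t₂ => size t₁ + size t₂ + 1
  | disj t₁ t₂ => size t₁ + size t₂ + 1
  | par _ t₁ t₂ => size t₁ + size t₂ + 1

lemma tau_size {p q : Proc Act} (h : Trans p ActT.tau q) : size q < size p := by
  generalize hα : ActT.tau = α at h
  induction h with
  | pre => simp [size]
  | ecTauL h ih => have := ih hα; simp [size]; omega
  | ecTauR h ih => have := ih hα; simp [size]; omega
  | conjTauL h ih => have := ih hα; simp [size]; omega
  | conjTauR h ih => have := ih hα; simp [size]; omega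
  | disjL => simp [size]
  | disjR => simp [size]
  | parTauL h ih => have := ih hα; simp [size]; omega
  | parTauR h ih => have := ih hα; simp [size]; omega
  | _ => simp_all

/-- Lemma B: a consistent process with an `a`-transition has a consistent
`a`-successor. -/
lemma exists_notFp_succ_act {p q : Proc Act} {a : Act} (hF : ¬ Fp p)
    (h : Trans p (ActT.act a) q) : ∃ q', Trans p (ActT.act a) q' ∧ ¬ Fp q' := by
  generalize hα : ActT.act a = α at h
  induction h with
  | @pre α t =>
    exact ⟨t, Trans.pre, fun ht => hF (Fp.pre ht)⟩
  | ecL h₁ h₂ ih =>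
    have hF₁ : ¬ Fp _ := fun hx => hF (Fp.ecL hx)
    obtain ⟨q', hq', hFq'⟩ := ih hF₁ hα
    exact ⟨q', Trans.ecL hq' h₂, hFq'⟩
  | ecR h₁ h₂ ih =>
    have hF₂ : ¬ Fp _ := fun hx => hF (Fp.ecR hx)
    obtain ⟨q', hq', hFq'⟩ := ih hF₂ hα
    exact ⟨q', Trans.ecR h₁ hq', hFq'⟩
  | @conjAct t₁ a' t₁' t₂ t₂' h₁ h₂ ih₁ ih₂ =>
    by_contra hc
    push_neg at hc
    exact hF (Fp.conjSucc (Trans.conjAct h₁ h₂)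
      hc)
  | parL hm h₁ h₂ ih =>
    have hf₁ : ¬ Fp _ := fun hx => hF (Fp.parL hx)
    have hf₂ : ¬ Fp _ := fun hx => hF (Fp.parR hx)
    obtain ⟨q', hq', hFq'⟩ := ih hf₁ hα
    refine ⟨_, Trans.parL hm hq' h₂, ?_⟩
    intro hx; rcases Fp_par_inv hx with h | h
    · exact hFq' h
    · exact hf₂ h
  | parR hm h₁ h₂ ih =>
    have hf₁ : ¬ Fp _ := fun hx => hF (Fp.parL hx)
    have hf₂ : ¬ Fp _ := fun hx => hF (Fp.parR hx)
    obtain ⟨q', hq', hFq'⟩ := ih hf₂ hα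
    refine ⟨_, Trans.parR hm h₁ hq', ?_⟩
    intro hx; rcases Fp_par_inv hx with h | h
    · exact hf₁ h
    · exact hFq' h
  | parSync hm h₁ h₂ ih₁ ih₂ =>
    have hf₁ : ¬ Fp _ := fun hx => hF (Fp.parL hx)
    have hf₂ : ¬ Fp _ := fun hx => hF (Fp.parR hx)
    obtain ⟨q₁, hq₁, hFq₁⟩ := ih₁ hf₁ hα
    obtain ⟨q₂, hq₂, hFq₂⟩ := ih₂ hf₂ hα
    refine ⟨_, Trans.parSync hm hq₁ hq₂, ?_⟩
    intro hx; rcases Fp_par_inv hx with h | h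
    · exact hFq₁ h
    · exact hFq₂ h
  | _ => simp_all

/-- Lemma B': a consistent unstable process has a consistent τ-successor. -/
lemma exists_notFp_succ_tau {p q : Proc Act} (hF : ¬ Fp p)
    (h : Trans p ActT.tau q) : ∃ q', Trans p ActT.tau q' ∧ ¬ Fp q' := by
  generalize hα : ActT.tau = α at h
  induction h with
  | @pre α t => exact ⟨t, Trans.pre, fun ht => hF (Fp.pre ht)⟩
  | ecTauL h ih =>
    have hf₁ : ¬ Fp _ := fun hx => hF (Fp.ecL hx)
    have hf₂ : ¬ Fp _ := fun hx => hF (Fp.ecR hx)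
    obtain ⟨q', hq', hFq'⟩ := ih hf₁ hα
    refine ⟨_, Trans.ecTauL hq', ?_⟩
    intro hx; rcases Fp_ec_inv hx with h | h
    · exact hFq' h
    · exact hf₂ h
  | ecTauR h ih =>
    have hf₁ : ¬ Fp _ := fun hx => hF (Fp.ecL hx)
    have hf₂ : ¬ Fp _ := fun hx => hF (Fp.ecR hx)
    obtain ⟨q', hq', hFq'⟩ := ih hf₂ hα
    refine ⟨_, Trans.ecTauR hq', ?_⟩
    intro hx; rcases Fp_ec_inv hx with h | h
    · exact hf₁ h
    · exact hFq' h
  | @conjTauL t₁ t₁' t₂ h ih =>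
    by_contra hc
    push_neg at hc
    exact hF (Fp.conjSucc (Trans.conjTauL h)
      hc)
  | @conjTauR t₂ t₂' t₁ h ih =>
    by_contra hc
    push_neg at hc
    exact hF (Fp.conjSucc (Trans.conjTauR h)
      hc)
  | @disjL t₁ t₂ =>
    by_cases h₁ : Fp t₁
    · by_cases h₂ : Fp t₂
      · exact absurd (Fp.disj h₁ h₂) hF
      · exact ⟨t₂, Trans.disjR, h₂⟩
    · exact ⟨t₁, Trans.disjL, h₁⟩
  | @disjR t₁ t₂ =>
    by_cases h₁ : Fp t₁
    · by_cases h₂ : Fp t₂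
      · exact absurd (Fp.disj h₁ h₂) hF
      · exact ⟨t₂, Trans.disjR, h₂⟩
    · exact ⟨t₁, Trans.disjL, h₁⟩
  | parTauL h ih =>
    have hf₁ : ¬ Fp _ := fun hx => hF (Fp.parL hx)
    have hf₂ : ¬ Fp _ := fun hx => hF (Fp.parR hx)
    obtain ⟨q', hq', hFq'⟩ := ih hf₁ hα
    refine ⟨_, Trans.parTauL hq', ?_⟩
    intro hx; rcases Fp_par_inv hx with h | h
    · exact hFq' h
    · exact hf₂ h
  | parTauR h ih =>
    have hf₁ : ¬ Fp _ := fun hx => hF (Fp.parL hx)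
    have hf₂ : ¬ Fp _ := fun hx => hF (Fp.parR hx)
    obtain ⟨q', hq', hFq'⟩ := ih hf₂ hα
    refine ⟨_, Trans.parTauR hq', ?_⟩
    intro hx; rcases Fp_par_inv hx with h | h
    · exact hf₁ h
    · exact hFq' h
  | _ => simp_all

/-- Lemma C: every consistent process reaches, consistently, a consistent
stable process. -/
lemma consistent_stabilize (p : Proc Act) (hF : ¬ Fp p) :
    ∃ q, Relation.ReflTransGen tauStepF p q ∧ ¬ Fp q ∧ Stable q := by
  by_cases hs : Stable p
  · exact ⟨p, Relation.ReflTransGen.refl, hF, hs⟩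
  · have : ∃ t, Trans p ActT.tau t := by
      by_contra hc; push_neg at hc; exact hs hc
    obtain ⟨t, ht⟩ := this
    obtain ⟨t', ht', hFt'⟩ := exists_notFp_succ_tau hF ht
    obtain ⟨q, hchain, hFq, hsq⟩ := consistent_stabilize t' hFt'
    exact ⟨q, Relation.ReflTransGen.head ⟨ht', hF, hFt'⟩ hchain, hFq, hsq⟩
termination_by size p
decreasing_by exact tau_size ht' 

open Relation

lemma chain_conj_proj {a b c : Proc Act}
    (h : ReflTransGen (tauT (Act := Act)) (conj a b) c) :
    ∃ a' b', c = conj a' b' ∧ ReflTransGen tauT a a' ∧ ReflTransGen tauT b b' := by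
  induction h with
  | refl => exact ⟨a, b, rfl, ReflTransGen.refl, ReflTransGen.refl⟩
  | tail h₁ h₂ ih =>
    obtain ⟨a', b', rfl, ha, hb⟩ := ih
    cases h₂ with
    | conjTauL h => exact ⟨_, _, rfl, ha.tail h, hb⟩
    | conjTauR h => exact ⟨_, _, rfl, ha, hb.tail h⟩

lemma chain_ec_proj {a b c : Proc Act}
    (h : ReflTransGen (tauT (Act := Act)) (ec a b) c) :
    ∃ a' b', c = ec a' b' ∧ ReflTransGen tauT a a' ∧ ReflTransGen tauT b b' := by
  induction h with
  | refl => exact ⟨a, b, rfl, ReflTransGen.refl, ReflTransGen.refl⟩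
  | tail h₁ h₂ ih =>
    obtain ⟨a', b', rfl, ha, hb⟩ := ih
    cases h₂ with
    | ecTauL h => exact ⟨_, _, rfl, ha.tail h, hb⟩
    | ecTauR h => exact ⟨_, _, rfl, ha, hb.tail h⟩

lemma chain_par_proj {A : Set Act} {a b c : Proc Act}
    (h : ReflTransGen (tauT (Act := Act)) (par A a b) c) :
    ∃ a' b', c = par A a' b' ∧ ReflTransGen tauT a a' ∧ ReflTransGen tauT b b' := by
  induction h with
  | refl => exact ⟨a, b, rfl, ReflTransGen.refl, ReflTransGen.refl⟩
  | tail h₁ h₂ ih =>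
    obtain ⟨a', b', rfl, ha, hb⟩ := ih
    cases h₂ with
    | parTauL h => exact ⟨_, _, rfl, ha.tail h, hb⟩
    | parTauR h => exact ⟨_, _, rfl, ha, hb.tail h⟩

lemma chainF_conj_proj {a b c : Proc Act}
    (h : ReflTransGen (tauStepF (Act := Act)) (conj a b) c) :
    ∃ a' b', c = conj a' b' ∧ ReflTransGen tauStepF a a' ∧ ReflTransGen tauStepF b b' := by
  induction h with
  | refl => exact ⟨a, b, rfl, ReflTransGen.refl, ReflTransGen.refl⟩
  | tail h₁ h₂ ih =>
    obtain ⟨a', b', rfl, ha, hb⟩ := ih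
    obtain ⟨ht, hF₁, hF₂⟩ := h₂
    cases ht with
    | conjTauL h =>
      exact ⟨_, _, rfl, ha.tail ⟨h, notFp_conj_left hF₁, notFp_conj_left hF₂⟩, hb⟩
    | conjTauR h =>
      exact ⟨_, _, rfl, ha, hb.tail ⟨h, notFp_conj_right hF₁, notFp_conj_right hF₂⟩⟩

lemma chainF_tauT {a b : Proc Act} (h : ReflTransGen (tauStepF (Act := Act)) a b) :
    ReflTransGen tauT a b := by
  induction h with
  | refl => exact ReflTransGen.refl
  | tail h₁ h₂ ih => exact ih.tail h₂.1

lemma chain_conj_liftL {a a' b : Proc Act} (h : ReflTransGen (tauT (Act := Act)) a a') :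
    ReflTransGen tauT (conj a b) (conj a' b) := by
  induction h with
  | refl => exact ReflTransGen.refl
  | tail h₁ h₂ ih => exact ih.tail (Trans.conjTauL h₂)

lemma chain_conj_liftR {b b' a : Proc Act} (h : ReflTransGen (tauT (Act := Act)) b b') :
    ReflTransGen tauT (conj a b) (conj a b') := by
  induction h with
  | refl => exact ReflTransGen.refl
  | tail h₁ h₂ ih => exact ih.tail (Trans.conjTauR h₂)

/-- Upgrade a plain τ-chain to an F-avoiding one when every state along it is
consistent (phrased via suffix-reachability of the endpoint). -/
lemma chain_upgrade {x y : Proc Act} (h : ReflTransGen (tauT (Act := Act)) x y)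
    (H : ∀ z, ReflTransGen tauT z y → ReflTransGen tauT x z → ¬ Fp z) :
    ReflTransGen tauStepF x y := by
  induction h using ReflTransGen.head_induction_on with
  | refl => exact ReflTransGen.refl
  | head h₁ h₂ ih =>
    rename_i p r
    refine ReflTransGen.head ⟨h₁, ?_, ?_⟩ (ih fun z hz hz' => H z hz (ReflTransGen.head h₁ hz'))
    · exact H p (ReflTransGen.head h₁ h₂) ReflTransGen.refl
    · exact H r h₂ (ReflTransGen.single h₁)

/-- Lemma A: inconsistency propagates forward along τ-chains to stable states. -/
lemma Fp_forward : ∀ {p : Proc Act}, Fp p →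
    ∀ {q}, ReflTransGen (tauT (Act := Act)) p q → Stable q → Fp q := by
  intro p hp
  induction hp with
  | bot =>
    intro q hq _
    cases hq.cases_head with
    | inl h => subst h; exact Fp.bot
    | inr h => obtain ⟨c, hc, _⟩ := h; exact absurd hc bot_no_trans
  | @pre t α ht ih =>
    intro q hq hsq
    cases hq.cases_head with
    | inl h => subst h; exact Fp.pre ht
    | inr h =>
      obtain ⟨c, hc, hc'⟩ := h
      cases hc
      exact ih hc' hsq
  | @disj t₁ t₂ h₁ h₂ ih₁ ih₂ =>
    intro q hq hsq
    cases hq.cases_head with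
    | inl h => subst h; exact absurd Trans.disjL (hsq t₁)
    | inr h =>
      obtain ⟨c, hc, hc'⟩ := h
      cases hc
      · exact ih₁ hc' hsq
      · exact ih₂ hc' hsq
  | @ecL t₁ t₂ h₁ ih =>
    intro q hq hsq
    obtain ⟨a', b', rfl, ha, hb⟩ := chain_ec_proj hq
    have : Stable a' := by
      rw [stable_iff] at hsq ⊢; exact fun h => hsq (Or.inl h)
    exact Fp.ecL (ih ha this)
  | @ecR t₂ t₁ h₁ ih =>
    intro q hq hsq
    obtain ⟨a', b', rfl, ha, hb⟩ := chain_ec_proj hq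
    have : Stable b' := by
      rw [stable_iff] at hsq ⊢; exact fun h => hsq (Or.inr h)
    exact Fp.ecR (ih hb this)
  | @parL t₁ A t₂ h₁ ih =>
    intro q hq hsq
    obtain ⟨a', b', rfl, ha, hb⟩ := chain_par_proj hq
    have : Stable a' := by
      rw [stable_iff] at hsq ⊢; exact fun h => hsq (Or.inl h)
    exact Fp.parL (ih ha this)
  | @parR t₂ A t₁ h₁ ih =>
    intro q hq hsq
    obtain ⟨a', b', rfl, ha, hb⟩ := chain_par_proj hq
    have : Stable b' := by
      rw [stable_iff] at hsq ⊢; exact fun h => hsq (Or.inr h)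
    exact Fp.parR (ih hb this)
  | @conjL t₁ t₂ h₁ ih =>
    intro q hq hsq
    obtain ⟨a', b', rfl, ha, hb⟩ := chain_conj_proj hq
    exact Fp.conjL (ih ha (stable_conj_left hsq))
  | @conjR t₂ t₁ h₁ ih =>
    intro q hq hsq
    obtain ⟨a', b', rfl, ha, hb⟩ := chain_conj_proj hq
    exact Fp.conjR (ih hb (stable_conj_right hsq))
  | @conjReady t₁ t₂ hst hr =>
    intro q hq hsq
    cases hq.cases_head with
    | inl h => subst h; exact Fp.conjReady hst hr
    | inr h => obtain ⟨c, hc, _⟩ := h; exact absurd hc (hst c)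
  | @conjSucc t₁ t₂ α s htr hall ih =>
    intro q hq hsq
    cases α with
    | act a =>
      have hst : Stable (conj t₁ t₂) := act_stable htr
      cases hq.cases_head with
      | inl h => subst h; exact Fp.conjSucc htr hall
      | inr h => obtain ⟨c, hc, _⟩ := h; exact absurd hc (hst c)
    | tau =>
      cases hq.cases_head with
      | inl h => subst h; exact absurd htr (hsq s)
      | inr h =>
        obtain ⟨c, hc, hc'⟩ := h
        exact ih c hc hc' hsq
  | @conjStable t₁ t₂ hall ih =>
    intro q hq hsq
    exact hall q hq hsq

lemma rsLT_spec {p y : Proc Act} (h : rsLT p y) :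
    Stable p ∧ Stable y ∧ (¬ Fp p → ¬ Fp y) ∧
    (∀ a p', wkF a p p' → ∃ y', wkF a y y' ∧ rsLT p' y') ∧
    (¬ Fp p → ready p = ready y) := by
  obtain ⟨R, hR, hpy⟩ := h
  obtain ⟨h₁, h₂, h₃, h₄, h₅⟩ := hR p y hpy
  exact ⟨h₁, h₂, h₃, fun a p' hw => by
    obtain ⟨y', hy', hr⟩ := h₄ a p' hw
    exact ⟨y', hy', R, hR, hr⟩, h₅⟩

lemma notFp_conj_ready {x y : Proc Act} (hF : ¬ Fp (conj x y))
    (hst : Stable (conj x y)) : ready x = ready y := by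
  by_contra h; exact hF (Fp.conjReady hst h)

lemma ready_conj_eq {x y : Proc Act} (hx : Stable x) (hy : Stable y)
    (hr : ready x = ready y) : ready (conj x y) = ready x := by
  ext α
  cases α with
  | tau =>
    simp only [ready, Set.mem_setOf_eq]
    constructor
    · rintro ⟨q, hq⟩; exact absurd hq (stable_conj hx hy q)
    · rintro ⟨q, hq⟩; exact absurd hq (hx q)
  | act a =>
    simp only [ready, Set.mem_setOf_eq]
    constructor
    · rintro ⟨q, hq⟩
      cases hq with
      | conjAct h₁ h₂ => exact ⟨_, h₁⟩
    · rintro ⟨q, hq⟩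
      have : ActT.act a ∈ ready y := hr ▸ ⟨q, hq⟩
      obtain ⟨q', hq'⟩ := this
      exact ⟨_, Trans.conjAct hq hq'⟩

lemma chainF_stable_eq {p q : Proc Act} (hs : Stable p)
    (h : ReflTransGen (tauStepF (Act := Act)) p q) : q = p := by
  cases h.cases_head with
  | inl h => exact h.symm
  | inr h => obtain ⟨c, hc, _⟩ := h; exact absurd hc.1 (hs c)

/-- The key consistency lemma: no inconsistent process can τ-reach a
conjunction of two processes that ready-simulate a common stable consistent
process. -/
lemma key : ∀ {x : Proc Act}, Fp x → ∀ p y z, Stable p → ¬ Fp p →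
    rsLT p y → rsLT p z → ¬ ReflTransGen (tauT (Act := Act)) x (conj y z) := by
  intro x hx
  induction hx with
  | bot =>
    intro p y z _ _ _ _ hq
    cases hq.cases_head with
    | inl h => exact absurd h (by simp)
    | inr h => obtain ⟨c, hc, _⟩ := h; exact bot_no_trans hc
  | @pre t α ht ih =>
    intro p y z hsp hFp hy hz hq
    cases hq.cases_head with
    | inl h => exact absurd h (by simp)
    | inr h =>
      obtain ⟨c, hc, hc'⟩ := h
      cases hc
      exact ih p y z hsp hFp hy hz hc'
  | @disj t₁ t₂ h₁ h₂ ih₁ ih₂ =>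
    intro p y z hsp hFp hy hz hq
    cases hq.cases_head with
    | inl h => exact absurd h (by simp)
    | inr h =>
      obtain ⟨c, hc, hc'⟩ := h
      cases hc
      · exact ih₁ p y z hsp hFp hy hz hc'
      · exact ih₂ p y z hsp hFp hy hz hc'
  | @ecL t₁ t₂ h₁ ih =>
    intro p y z _ _ _ _ hq
    obtain ⟨a', b', he, _, _⟩ := chain_ec_proj hq
    exact absurd he (by simp)
  | @ecR t₂ t₁ h₁ ih =>
    intro p y z _ _ _ _ hq
    obtain ⟨a', b', he, _, _⟩ := chain_ec_proj hq
    exact absurd he (by simp)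
  | @parL t₁ A t₂ h₁ ih =>
    intro p y z _ _ _ _ hq
    obtain ⟨a', b', he, _, _⟩ := chain_par_proj hq
    exact absurd he (by simp)
  | @parR t₂ A t₁ h₁ ih =>
    intro p y z _ _ _ _ hq
    obtain ⟨a', b', he, _, _⟩ := chain_par_proj hq
    exact absurd he (by simp)
  | @conjL t₁ t₂ h₁ ih =>
    intro p y z hsp hFp hy hz hq
    obtain ⟨a', b', he, ha, hb⟩ := chain_conj_proj hq
    obtain ⟨rfl, rfl⟩ : a' = y ∧ b' = z := by
      constructor <;> [exact (conj.injEq .. ▸ he).1.symm; exact (conj.injEq .. ▸ he).2.symm]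
    have hsy := (rsLT_spec hy).1
    have hsy' := (rsLT_spec hy).2.1
    exact (rsLT_spec hy).2.2.1 hFp (Fp_forward h₁ ha hsy')
  | @conjR t₂ t₁ h₁ ih =>
    intro p y z hsp hFp hy hz hq
    obtain ⟨a', b', he, ha, hb⟩ := chain_conj_proj hq
    obtain ⟨rfl, rfl⟩ : a' = y ∧ b' = z := by
      constructor <;> [exact (conj.injEq .. ▸ he).1.symm; exact (conj.injEq .. ▸ he).2.symm]
    exact (rsLT_spec hz).2.2.1 hFp (Fp_forward h₁ hb (rsLT_spec hz).2.1)
  | @conjReady t₁ t₂ hst hr =>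
    intro p y z hsp hFp hy hz hq
    cases hq.cases_head with
    | inl h =>
      obtain ⟨rfl, rfl⟩ : t₁ = y ∧ t₂ = z := by
        exact ⟨(conj.injEq .. ▸ h).1, (conj.injEq .. ▸ h).2⟩
      exact hr (((rsLT_spec hy).2.2.2.2 hFp).symm.trans ((rsLT_spec hz).2.2.2.2 hFp))
    | inr h => obtain ⟨c, hc, _⟩ := h; exact hst c hc
  | @conjSucc t₁ t₂ α s htr hall ih =>
    intro p y z hsp hFp hy hz hq
    cases α with
    | tau =>
      cases hq.cases_head with
      | inl h =>
        have : Stable (conj y z) := stable_conj (rsLT_spec hy).2.1 (rsLT_spec hz).2.1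
        rw [← h] at this
        exact this s htr
      | inr h =>
        obtain ⟨c, hc, hc'⟩ := h
        exact ih c hc p y z hsp hFp hy hz hc'
    | act a =>
      have hst : Stable (conj t₁ t₂) := act_stable htr
      cases hq.cases_head with
      | inr h => obtain ⟨c, hc, _⟩ := h; exact hst c hc
      | inl h =>
        obtain ⟨rfl, rfl⟩ : t₁ = y ∧ t₂ = z :=
          ⟨(conj.injEq .. ▸ h).1, (conj.injEq .. ▸ h).2⟩
        -- a is in the ready set of y, hence of p
        have hay : ActT.act a ∈ ready t₁ := by
          cases htr with
          | conjAct h₁ h₂ => exact ⟨_, h₁⟩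
        have hap : ActT.act a ∈ ready p := ((rsLT_spec hy).2.2.2.2 hFp) ▸ hay
        obtain ⟨p₀, hp₀⟩ := hap
        obtain ⟨p₁, hp₁, hFp₁⟩ := exists_notFp_succ_act hFp hp₀
        obtain ⟨p', hchain, hFp', hsp'⟩ := consistent_stabilize p₁ hFp₁
        have hwk : wkF a p p' :=
          ⟨p, p₁, ReflTransGen.refl, hFp, hFp, hp₁, hFp₁, hchain, hFp', hsp'⟩
        obtain ⟨y', hwy, hry⟩ := (rsLT_spec hy).2.2.2.1 a p' hwk
        obtain ⟨z', hwz, hrz⟩ := (rsLT_spec hz).2.2.2.1 a p' hwk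
        obtain ⟨r₂, s₂, hch₂, _, _, htr₂, hFs₂, hch₂', hFy', hsy'⟩ := hwy
        obtain ⟨r₃, s₃, hch₃, _, _, htr₃, hFs₃, hch₃', hFz', hsz'⟩ := hwz
        have hr₂ : r₂ = t₁ := chainF_stable_eq (rsLT_spec hy).2.1 hch₂
        have hr₃ : r₃ = t₂ := chainF_stable_eq (rsLT_spec hz).2.1 hch₃
        subst hr₂; subst hr₃
        have hsucc : Trans (conj r₂ r₃) (ActT.act a) (conj s₂ s₃) :=
          Trans.conjAct htr₂ htr₃
        refine ih (conj s₂ s₃) hsucc p' y' z' hsp' hFp' hry hrz ?_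
        exact (chain_conj_liftL (chainF_tauT hch₂')).trans
          (chain_conj_liftR (chainF_tauT hch₃'))
  | @conjStable t₁ t₂ hall ih =>
    intro p y z hsp hFp hy hz hq
    have hstc : Stable (conj y z) := stable_conj (rsLT_spec hy).2.1 (rsLT_spec hz).2.1
    exact ih (conj y z) hq hstc p y z hsp hFp hy hz ReflTransGen.refl

/-- Consequence of the key lemma directly usable for states on a τ-chain. -/
lemma notFp_of_reach_conj {p y z x : Proc Act} (hsp : Stable p) (hFp : ¬ Fp p)
    (hy : rsLT p y) (hz : rsLT p z)
    (hx : ReflTransGen (tauT (Act := Act)) x (conj y z)) : ¬ Fp x :=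
  fun hF => key hF p y z hsp hFp hy hz hx

/-- The identity on stable processes is a stable ready simulation. -/
lemma stableRS_id : StableRS (fun p q : Proc Act => p = q ∧ Stable p) := by
  rintro p q ⟨rfl, hs⟩
  refine ⟨hs, hs, fun h => h, ?_, fun _ => rfl⟩
  intro a p' hw
  obtain ⟨r, s, _, _, _, _, _, _, hF', hs'⟩ := hw
  exact ⟨p', ⟨r, s, ‹_›, ‹_›, ‹_›, ‹_›, ‹_›, ‹_›, hF', hs'⟩, rfl, hs'⟩

/-- Projection on the left conjunct is a stable ready simulation. -/
lemma stableRS_proj1 :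
    StableRS (fun x y : Proc Act => ∃ a b, x = conj a b ∧ y = a ∧ Stable a ∧ Stable b) := by
  rintro x y ⟨a, b, rfl, rfl, hsa, hsb⟩
  refine ⟨stable_conj hsa hsb, hsa, notFp_conj_left, ?_, ?_⟩
  · intro a₀ x' hw
    obtain ⟨r, s, hch₁, hFx, hFr, htr, hFs, hch₂, hFx', hsx'⟩ := hw
    have hr : r = conj y b := chainF_stable_eq (stable_conj hsa hsb) hch₁
    subst hr
    cases htr with
    | conjAct h₁ h₂ =>
      rename_i s₁ s₂
      obtain ⟨a', b', rfl, hca, hcb⟩ := chainF_conj_proj hch₂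
      refine ⟨a', ⟨y, s₁, ReflTransGen.refl, notFp_conj_left hFx, notFp_conj_left hFr,
        h₁, notFp_conj_left hFs, hca, notFp_conj_left hFx', stable_conj_left hsx'⟩, ?_⟩
      exact ⟨a', b', rfl, rfl, stable_conj_left hsx', stable_conj_right hsx'⟩
  · intro hF
    exact ready_conj_eq hsa hsb (notFp_conj_ready hF (stable_conj hsa hsb))

/-- Projection on the right conjunct is a stable ready simulation. -/
lemma stableRS_proj2 :
    StableRS (fun x y : Proc Act => ∃ a b, x = conj a b ∧ y = b ∧ Stable a ∧ Stable b) := by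
  rintro x y ⟨a, b, rfl, rfl, hsa, hsb⟩
  refine ⟨stable_conj hsa hsb, hsb, notFp_conj_right, ?_, ?_⟩
  · intro a₀ x' hw
    obtain ⟨r, s, hch₁, hFx, hFr, htr, hFs, hch₂, hFx', hsx'⟩ := hw
    have hr : r = conj a y := chainF_stable_eq (stable_conj hsa hsb) hch₁
    subst hr
    cases htr with
    | conjAct h₁ h₂ =>
      rename_i s₁ s₂
      obtain ⟨a', b', rfl, hca, hcb⟩ := chainF_conj_proj hch₂
      refine ⟨b', ⟨y, s₂, ReflTransGen.refl, notFp_conj_right hFx, notFp_conj_right hFr,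
        h₂, notFp_conj_right hFs, hcb, notFp_conj_right hFx', stable_conj_right hsx'⟩, ?_⟩
      exact ⟨a', b', rfl, rfl, stable_conj_left hsx', stable_conj_right hsx'⟩
  · intro hF
    exact (ready_conj_eq hsa hsb (notFp_conj_ready hF (stable_conj hsa hsb))).trans
      (notFp_conj_ready hF (stable_conj hsa hsb))

/-- Pairing a process with a conjunction of two processes simulating it
is a stable ready simulation. -/
lemma stableRS_ci :
    StableRS (fun p x : Proc Act =>
      ∃ y z, x = conj y z ∧ Stable p ∧ ¬ Fp p ∧ rsLT p y ∧ rsLT p z) := by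
  rintro p x ⟨y, z, rfl, hsp, hFp, hy, hz⟩
  have hsy := (rsLT_spec hy).2.1
  have hsz := (rsLT_spec hz).2.1
  have hFc : ¬ Fp (conj y z) :=
    notFp_of_reach_conj hsp hFp hy hz ReflTransGen.refl
  refine ⟨hsp, stable_conj hsy hsz, fun _ => hFc, ?_, ?_⟩
  · intro a p'' hw
    obtain ⟨-, -, -, -, -, -, -, -, hFp'', hsp''⟩ := id hw
    obtain ⟨y', hwy, hry⟩ := (rsLT_spec hy).2.2.2.1 a p'' hw
    obtain ⟨z', hwz, hrz⟩ := (rsLT_spec hz).2.2.2.1 a p'' hw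
    obtain ⟨r₂, s₂, hch₂, _, _, htr₂, hFs₂, hch₂', hFy', hsy'⟩ := hwy
    obtain ⟨r₃, s₃, hch₃, _, _, htr₃, hFs₃, hch₃', hFz', hsz'⟩ := hwz
    have hr₂ : r₂ = y := chainF_stable_eq hsy hch₂
    have hr₃ : r₃ = z := chainF_stable_eq hsz hch₃
    subst hr₂; subst hr₃
    have hplain : ReflTransGen (tauT (Act := Act)) (conj s₂ s₃) (conj y' z') :=
      (chain_conj_liftL (chainF_tauT hch₂')).trans (chain_conj_liftR (chainF_tauT hch₃'))
    have hFss : ¬ Fp (conj s₂ s₃) :=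
      notFp_of_reach_conj hsp'' hFp'' hry hrz hplain
    have hFyz' : ¬ Fp (conj y' z') :=
      notFp_of_reach_conj hsp'' hFp'' hry hrz ReflTransGen.refl
    refine ⟨conj y' z', ⟨conj r₂ r₃, conj s₂ s₃, ReflTransGen.refl, hFc, hFc,
      Trans.conjAct htr₂ htr₃, hFss, ?_, hFyz',
      stable_conj hsy' hsz'⟩, ?_⟩
    · exact chain_upgrade hplain
        (fun w hw _ => notFp_of_reach_conj hsp'' hFp'' hry hrz hw)
    · exact ⟨y', z', rfl, hsp'', hFp'', hry, hrz⟩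
  · intro _
    have h₁ := (rsLT_spec hy).2.2.2.2 hFp
    have h₂ := (rsLT_spec hz).2.2.2.2 hFp
    rw [ready_conj_eq hsy hsz (h₁.symm.trans h₂)]
    exact h₁

/-- ⊑_RS interacts well with disjunction and conjunction. -/
theorem stmt5 {Act : Type} (p₁ p₂ p₃ : Proc Act) :
    rsLE p₁ (disj p₁ p₂) ∧ rsLE p₂ (disj p₁ p₂) ∧
    (rsLE p₁ p₃ → rsLE p₂ p₃ → rsLE (disj p₁ p₂) p₃) ∧
    rsLE (conj p₁ p₂) p₁ ∧ rsLE (conj p₁ p₂) p₂ ∧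
    (rsLE p₁ p₂ → rsLE p₁ p₃ → rsLE p₁ (conj p₂ p₃)) := by
  refine ⟨?_, ?_, ?_, ?_, ?_, ?_⟩
  · -- p₁ ⊑ p₁ ∨ p₂
    rintro p' ⟨ch, hF1, hFp', hs⟩
    have hFd : ¬ Fp (disj p₁ p₂) := fun h => hF1 (Fp_disj_inv h).1
    exact ⟨p', ⟨Relation.ReflTransGen.head ⟨Trans.disjL, hFd, hF1⟩ ch, hFd, hFp', hs⟩,
      _, stableRS_id, rfl, hs⟩
  · -- p₂ ⊑ p₁ ∨ p₂
    rintro p' ⟨ch, hF2, hFp', hs⟩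
    have hFd : ¬ Fp (disj p₁ p₂) := fun h => hF2 (Fp_disj_inv h).2
    exact ⟨p', ⟨Relation.ReflTransGen.head ⟨Trans.disjR, hFd, hF2⟩ ch, hFd, hFp', hs⟩,
      _, stableRS_id, rfl, hs⟩
  · -- joint upper bound
    rintro h1 h2 p' ⟨ch, hFd, hFp', hs⟩
    cases ch.cases_head with
    | inl h =>
      subst h
      exact absurd Trans.disjL (hs p₁)
    | inr h =>
      obtain ⟨c, ⟨tr, _, hFc⟩, ch'⟩ := h
      cases tr with
      | disjL => exact h1 p' ⟨ch', hFc, hFp', hs⟩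
      | disjR => exact h2 p' ⟨ch', hFc, hFp', hs⟩
  · -- p₁ ∧ p₂ ⊑ p₁
    rintro p' ⟨ch, hFc, hFp', hs⟩
    obtain ⟨q₁, q₂, rfl, ch₁, ch₂⟩ := chainF_conj_proj ch
    exact ⟨q₁, ⟨ch₁, notFp_conj_left hFc, notFp_conj_left hFp', stable_conj_left hs⟩,
      _, stableRS_proj1,
      q₁, q₂, rfl, rfl, stable_conj_left hs, stable_conj_right hs⟩
  · -- p₁ ∧ p₂ ⊑ p₂
    rintro p' ⟨ch, hFc, hFp', hs⟩
    obtain ⟨q₁, q₂, rfl, ch₁, ch₂⟩ := chainF_conj_proj ch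
    exact ⟨q₂, ⟨ch₂, notFp_conj_right hFc, notFp_conj_right hFp', stable_conj_right hs⟩,
      _, stableRS_proj2,
      q₁, q₂, rfl, rfl, stable_conj_left hs, stable_conj_right hs⟩
  · -- greatest lower bound
    rintro h2 h3 p' hep
    obtain ⟨ch, hF1, hFp', hsp'⟩ := hep
    obtain ⟨q₂, hq₂eps, hq₂⟩ := h2 p' ⟨ch, hF1, hFp', hsp'⟩
    obtain ⟨q₃, hq₃eps, hq₃⟩ := h3 p' ⟨ch, hF1, hFp', hsp'⟩
    obtain ⟨ch₂, hF2, hFq₂, hsq₂⟩ := hq₂eps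
    obtain ⟨ch₃, hF3, hFq₃, hsq₃⟩ := hq₃eps
    have hplain : Relation.ReflTransGen (tauT (Act := Act)) (conj p₂ p₃) (conj q₂ q₃) :=
      (chain_conj_liftL (chainF_tauT ch₂)).trans (chain_conj_liftR (chainF_tauT ch₃))
    have Hgood : ∀ w, Relation.ReflTransGen (tauT (Act := Act)) w (conj q₂ q₃) → ¬ Fp w :=
      fun w hw => notFp_of_reach_conj hsp' hFp' hq₂ hq₃ hw
    refine ⟨conj q₂ q₃, ⟨chain_upgrade hplain (fun w hw _ => Hgood w hw),
      Hgood _ hplain, Hgood _ Relation.ReflTransGen.refl,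
      stable_conj hsq₂ hsq₃⟩, _, stableRS_ci, q₂, q₃, rfl, hsp', hFp', hq₂, hq₃⟩

end Proc
end
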